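/- Let d ≡ 3 (mod 4) be prime and R_m = (1/d) Σ_{r,s ∈ ℤ_d} τ^{m(r²+s²)} W_{(r,s)}. Then tr(R_m R_{m'}*) = d if m = m' and tr(R_m R_{m'}*) = −1 if m ≠ m' (for 0 ≤ m, m' ≤ d−1). -/

import Mathlib

open Matrix Complex BigOperators
open scoped Kronecker

noncomputable def tauC (d : ℕ) : ℂ := - Complex.exp (Real.pi * Complex.I / d)

/-- `U = diag(e^{2πik/d})`. -/
noncomputable def Umat (d : ℕ) [NeZero d] : Matrix (ZMod d) (ZMod d) ℂ :=
  Matrix.diagonal fun k => Complex.exp (2 * Real.pi * Complex.I * k.val / d)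

/-- `V` the cyclic shift: `V e_r = e_{r+1}`. -/
def Vmat (d : ℕ) [NeZero d] : Matrix (ZMod d) (ZMod d) ℂ :=
  fun i j => if i = j + 1 then 1 else 0

/-- Weyl–Heisenberg matrices `W_{(r,s)} = τ^{rs} V^r U^s`. -/
noncomputable def WH (d : ℕ) [NeZero d] (r s : ZMod d) : Matrix (ZMod d) (ZMod d) ℂ :=
  (tauC d) ^ (r.val * s.val) • ((Vmat d) ^ r.val * (Umat d) ^ s.val)

/-- The SWAP operator on `ℂ^d ⊗ ℂ^d`. -/
def SWAPmat (d : ℕ) [NeZero d] : Matrix (ZMod d × ZMod d) (ZMod d × ZMod d) ℂ :=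
  fun p q => if p.1 = q.2 ∧ p.2 = q.1 then 1 else 0

/-- `R_m = (1/d) Σ_{r,s} τ^{m(r²+s²)} W_{(r,s)}`. -/
noncomputable def Rmat (d : ℕ) [NeZero d] (m : ZMod d) : Matrix (ZMod d) (ZMod d) ℂ :=
  (1 / d : ℂ) • ∑ r : ZMod d, ∑ s : ZMod d,
    (tauC d) ^ (m.val * (r.val ^ 2 + s.val ^ 2)) • WH d r s

noncomputable def zetaC (d : ℕ) : ℂ := Complex.exp (2 * Real.pi * Complex.I / d)

lemma zetaC_prim (d : ℕ) [NeZero d] : IsPrimitiveRoot (zetaC d) d :=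
  Complex.isPrimitiveRoot_exp d (NeZero.ne d)

lemma zetaC_pow_d (d : ℕ) [NeZero d] : zetaC d ^ d = 1 := (zetaC_prim d).pow_eq_one

noncomputable def psiC (d : ℕ) [NeZero d] : AddChar (ZMod d) ℂ :=
  AddChar.zmodChar d (zetaC_pow_d d)

lemma psiC_prim (d : ℕ) [NeZero d] : (psiC d).IsPrimitive :=
  AddChar.zmodChar_primitive_of_primitive_root d (zetaC_prim d)

lemma psiC_natCast (d : ℕ) [NeZero d] (n : ℕ) : psiC d (n : ZMod d) = zetaC d ^ n :=
  AddChar.zmodChar_apply' _ n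

lemma zetaC_conj (d : ℕ) : (starRingEnd ℂ) (zetaC d) = (zetaC d)⁻¹ := by
  rw [zetaC, ← Complex.exp_conj, ← Complex.exp_neg]
  congr 1
  simp only [map_div₀, _root_.map_mul, map_ofNat, Complex.conj_ofReal, Complex.conj_I,
    Complex.conj_natCast, map_neg]
  ring

lemma psiC_conj (d : ℕ) [NeZero d] (x : ZMod d) :
    (starRingEnd ℂ) (psiC d x) = psiC d (-x) := by
  have h1 : psiC d x * psiC d (-x) = 1 := by
    rw [← AddChar.map_add_eq_mul]; simp
  have h2 : (starRingEnd ℂ) (psiC d x) = (psiC d x)⁻¹ := by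
    show (starRingEnd ℂ) (zetaC d ^ x.val) = (zetaC d ^ x.val)⁻¹
    rw [map_pow, zetaC_conj, inv_pow]
  rw [h2]
  exact inv_eq_of_mul_eq_one_right h1

lemma tauC_eq (d : ℕ) [NeZero d] (hodd : Odd d) : tauC d = zetaC d ^ ((d + 1) / 2) := by
  obtain ⟨j, hj⟩ := hodd
  have hk : (d + 1) / 2 = j + 1 := by omega
  have hd0 : (d : ℂ) ≠ 0 := Nat.cast_ne_zero.mpr (NeZero.ne d)
  rw [tauC, zetaC, ← Complex.exp_nat_mul, hk]
  have hdc : (d : ℂ) = 2 * j + 1 := by rw [hj]; push_cast; ring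
  have key : ((j + 1 : ℕ) : ℂ) * (2 * Real.pi * Complex.I / d) =
      Real.pi * Complex.I + Real.pi * Complex.I / d := by
    rw [hdc]
    have h21 : (2 * (j:ℂ) + 1) ≠ 0 := by rw [← hdc]; exact hd0
    field_simp
    push_cast
    ring
  rw [key, Complex.exp_add, Complex.exp_pi_mul_I, neg_one_mul]

lemma tauC_pow (d : ℕ) [NeZero d] (hodd : Odd d) (n : ℕ) :
    tauC d ^ n = psiC d ((((d + 1) / 2 : ℕ) : ZMod d) * n) := by
  rw [tauC_eq d hodd, ← pow_mul, ← Nat.cast_mul, psiC_natCast]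

lemma psiC_sum (d : ℕ) [NeZero d] (b : ZMod d) :
    ∑ x : ZMod d, psiC d (x * b) = if b = 0 then (d : ℂ) else 0 := by
  have := AddChar.sum_mulShift b (psiC_prim d)
  rw [ZMod.card] at this
  rw [this]
  split_ifs <;> simp

lemma psiC_mul_star (d : ℕ) [NeZero d] (x y : ZMod d) :
    psiC d x * star (psiC d y) = psiC d (x - y) := by
  rw [show star (psiC d y) = (starRingEnd ℂ) (psiC d y) from rfl, psiC_conj,
    ← AddChar.map_add_eq_mul, sub_eq_add_neg]

lemma Vmat_pow_apply (d : ℕ) [NeZero d] (n : ℕ) (i j : ZMod d) :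
    ((Vmat d) ^ n) i j = if i = j + (n : ZMod d) then 1 else 0 := by
  induction n generalizing i j with
  | zero => simp [Matrix.one_apply]
  | succ n ih =>
    rw [pow_succ, Matrix.mul_apply]
    simp only [Vmat, mul_ite, mul_one, mul_zero]
    rw [Finset.sum_ite_eq' Finset.univ (j + 1) (fun k => ((Vmat d) ^ n) i k)]
    simp only [Finset.mem_univ, if_true, ih]
    have : j + 1 + (n : ZMod d) = j + ((n : ZMod d) + 1) := by ring
    rw [this]
    push_cast
    rfl

lemma Umat_pow_apply (d : ℕ) [NeZero d] (n : ℕ) (i j : ZMod d) :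
    ((Umat d) ^ n) i j = if i = j then zetaC d ^ (j.val * n) else 0 := by
  by_cases h : i = j
  · subst h
    rw [Umat, Matrix.diagonal_pow, Matrix.diagonal_apply_eq, if_pos rfl, Pi.pow_apply,
      zetaC, ← Complex.exp_nat_mul, ← Complex.exp_nat_mul]
    congr 1
    push_cast
    ring
  · rw [Umat, Matrix.diagonal_pow, Matrix.diagonal_apply_ne _ h, if_neg h]

lemma WH_apply (d : ℕ) [NeZero d] (r s i j : ZMod d) :
    WH d r s i j =
      if i = j + r then tauC d ^ (r.val * s.val) * zetaC d ^ (j.val * s.val) else 0 := by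
  rw [WH, Matrix.smul_apply, Matrix.mul_apply]
  simp only [Umat_pow_apply, mul_ite, mul_zero, one_mul]
  rw [Finset.sum_ite_eq' Finset.univ j (fun k => ((Vmat d) ^ r.val) i k * zetaC d ^ (j.val * s.val))]
  simp only [Finset.mem_univ, if_true, Vmat_pow_apply, ZMod.natCast_val, ZMod.cast_id]
  rw [ite_mul, zero_mul, smul_eq_mul, mul_ite, mul_zero]
  simp

lemma WH_trace_ortho (d : ℕ) [NeZero d] (hodd : Odd d) (r s r' s' : ZMod d) :
    Matrix.trace (WH d r s * (WH d r' s')ᴴ) = if r = r' ∧ s = s' then (d : ℂ) else 0 := by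
  classical
  have expand : Matrix.trace (WH d r s * (WH d r' s')ᴴ)
      = ∑ i : ZMod d, ∑ j : ZMod d, WH d r s i j * star (WH d r' s' i j) := by
    simp [Matrix.trace, Matrix.diag, Matrix.mul_apply, Matrix.conjTranspose_apply]
  rw [expand, Finset.sum_comm]
  simp only [WH_apply, ite_mul, zero_mul]
  by_cases hr : r = r'
  · subst hr
    have step : ∀ j : ZMod d,
        (∑ i : ZMod d, if i = j + r then
          tauC d ^ (r.val * s.val) * zetaC d ^ (j.val * s.val) *
            star (if i = j + r then
              tauC d ^ (r.val * s'.val) * zetaC d ^ (j.val * s'.val) else 0) else 0)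
        = psiC d ((((d+1)/2 : ℕ) : ZMod d) * r * s - (((d+1)/2 : ℕ) : ZMod d) * r * s'
            + j * (s - s')) := by
      intro j
      rw [Finset.sum_ite_eq' Finset.univ (j + r)]
      simp only [Finset.mem_univ, if_true, if_pos rfl]
      rw [star_mul', tauC_pow d hodd, tauC_pow d hodd, ← psiC_natCast, ← psiC_natCast]
      rw [mul_comm (star _) (star _), mul_mul_mul_comm, psiC_mul_star, psiC_mul_star]
      rw [← AddChar.map_add_eq_mul]
      congr 1
      push_cast [ZMod.natCast_val, ZMod.cast_id]
      ring
    rw [Finset.sum_congr rfl (fun j _ => step j)]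
    by_cases hs : s = s'
    · subst hs
      simp
    · have hss : s - s' ≠ 0 := sub_ne_zero_of_ne hs
      simp only [AddChar.map_add_eq_mul]
      rw [← Finset.mul_sum, psiC_sum, if_neg hss, mul_zero, if_neg]
      exact fun h => hs h.2
  · rw [if_neg (fun h => hr h.1)]
    apply Finset.sum_eq_zero; intro j _
    apply Finset.sum_eq_zero; intro i _
    by_cases h1 : i = j + r
    · have h2 : ¬ (i = j + r') := by
        rw [h1]; simp only [add_right_inj]; exact hr
      rw [if_pos h1, if_neg h2, star_zero, mul_zero]
    · rw [if_neg h1]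

open MulChar in
lemma gauss_sq (d : ℕ) [Fact d.Prime] [NeZero d] (hd : d % 4 = 3) (c : ZMod d) (hc : c ≠ 0) :
    (∑ r : ZMod d, psiC d (c * r ^ 2)) ^ 2 = -(d : ℂ) := by
  classical
  have hd2 : d ≠ 2 := by omega
  have hF : ringChar (ZMod d) ≠ 2 := by rw [ZMod.ringChar_zmod_n]; exact_mod_cast hd2
  set χ : MulChar (ZMod d) ℂ := (quadraticChar (ZMod d)).ringHomComp (Int.castRingHom ℂ) with hχ
  have hχ₁ : χ ≠ 1 := by
    obtain ⟨a, ha⟩ := quadraticChar_exists_neg_one' hF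
    refine ne_one_iff.mpr ⟨a, ?_⟩
    simp only [hχ, ringHomComp_apply, ha, eq_intCast, Int.cast_neg, Int.cast_one]
    norm_num
  have hχ₂ : χ.IsQuadratic := (quadraticChar_isQuadratic (ZMod d)).comp _
  -- counting lemma
  have count : ∀ a : ZMod d,
      ((Finset.univ.filter fun r : ZMod d => r ^ 2 = a).card : ℂ) = 1 + χ a := by
    intro a
    have h1 := quadraticChar_card_sqrts hF a
    have h2 : {x : ZMod d | x ^ 2 = a}.toFinset = Finset.univ.filter fun r => r ^ 2 = a := by
      ext x; simp
    rw [h2] at h1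
    have : χ a = ((quadraticChar (ZMod d) a : ℤ) : ℂ) := by
      simp [hχ, ringHomComp_apply]
    rw [this]
    rw [show ((1 : ℂ) + ((quadraticChar (ZMod d) a : ℤ) : ℂ))
        = (((quadraticChar (ZMod d) a + 1 : ℤ)) : ℂ) by push_cast; ring, ← h1]
    push_cast
    ring
  -- step 1 : fiberwise decomposition
  have step1 : ∑ r : ZMod d, psiC d (c * r ^ 2)
      = ∑ a : ZMod d, (1 + χ a) * psiC d (c * a) := by
    rw [← Finset.sum_fiberwise_of_maps_to (fun (r : ZMod d) _ => Finset.mem_univ (r ^ 2))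
      (fun r => psiC d (c * r ^ 2))]
    refine Finset.sum_congr rfl fun a _ => ?_
    have hcong : ∀ r ∈ Finset.univ.filter fun r : ZMod d => r ^ 2 = a,
        psiC d (c * r ^ 2) = psiC d (c * a) := fun r hr => by
      rw [(Finset.mem_filter.mp hr).2]
    rw [Finset.sum_congr rfl hcong, Finset.sum_const, nsmul_eq_mul, count]
  -- step 2 : split
  have zero1 : ∑ a : ZMod d, psiC d (c * a) = 0 := by
    have := psiC_sum d c
    rw [if_neg hc] at this
    rw [← this]
    exact Finset.sum_congr rfl fun a _ => by rw [mul_comm]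
  have step2 : ∑ r : ZMod d, psiC d (c * r ^ 2)
      = gaussSum χ (AddChar.mulShift (psiC d) c) := by
    rw [step1, gaussSum]
    simp only [add_mul, one_mul, Finset.sum_add_distrib, zero1, zero_add,
      AddChar.mulShift_apply]
  -- square of gauss sum
  have hcu : IsUnit c := isUnit_iff_ne_zero.mpr hc
  have hχc : χ c ≠ 0 := by
    simp only [hχ, ringHomComp_apply, eq_intCast, ne_eq, Int.cast_eq_zero]
    rw [quadraticChar_eq_zero_iff]
    exact hc
  have hsq : χ c ^ 2 = 1 := by
    rcases hχ₂ c with h | h | h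
    · exact absurd h hχc
    · rw [h]; norm_num
    · rw [h]; norm_num
  have hGS := gaussSum_sq hχ₁ hχ₂ (psiC_prim d)
  have hshift := gaussSum_mulShift χ (psiC d) hcu.unit
  have hcard : (Fintype.card (ZMod d) : ℂ) = d := by rw [ZMod.card]
  have hneg : χ (-1) = -1 := by
    have : quadraticChar (ZMod d) (-1) = -1 := by
      apply quadraticChar_neg_one_iff_not_isSquare.mpr
      rw [ZMod.exists_sq_eq_neg_one_iff, hd]
      simp
    simp [hχ, ringHomComp_apply, this]
  have hmu : (hcu.unit : ZMod d) = c := IsUnit.unit_spec hcu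
  rw [step2]
  have := congrArg (· ^ 2) hshift
  simp only [mul_pow] at this
  rw [hmu, hsq, one_mul] at this
  rw [this, hGS, hneg, hcard]
  ring

lemma trace_WH_sums (d : ℕ) [NeZero d] (hodd : Odd d) (f g : ZMod d → ZMod d → ℂ) :
    Matrix.trace ((∑ r : ZMod d, ∑ s : ZMod d, f r s • WH d r s) *
      (∑ r : ZMod d, ∑ s : ZMod d, g r s • WH d r s)ᴴ)
    = ∑ r : ZMod d, ∑ s : ZMod d, f r s * star (g r s) * d := by
  classical
  simp only [Matrix.conjTranspose_sum, Matrix.conjTranspose_smul, Matrix.sum_mul,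
    Matrix.mul_sum, Matrix.smul_mul, Matrix.mul_smul, Matrix.trace_sum, Matrix.trace_smul,
    smul_smul, smul_eq_mul, WH_trace_ortho d hodd]
  refine Finset.sum_congr rfl fun r _ => Finset.sum_congr rfl fun s _ => ?_
  rw [Finset.sum_eq_single r]
  · rw [Finset.sum_eq_single s]
    · simp
      ring
    · intro s' _ hs'
      simp [hs']
    · intro h; exact absurd (Finset.mem_univ s) h
  · intro r' _ hr'
    apply Finset.sum_eq_zero; intro s' _
    simp [hr']
  · intro h; exact absurd (Finset.mem_univ r) h

theorem Rmat_trace_products (d : ℕ) [Fact d.Prime] [NeZero d] (hd : d % 4 = 3)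
    (m m' : ZMod d) :
    Matrix.trace (Rmat d m * (Rmat d m')ᴴ) = if m = m' then (d : ℂ) else -1 := by
  classical
  have hodd : Odd d := Nat.odd_iff.mpr (by omega)
  have hd0 : (d : ℂ) ≠ 0 := Nat.cast_ne_zero.mpr (NeZero.ne d)
  have key : Matrix.trace (Rmat d m * (Rmat d m')ᴴ)
      = (1/d : ℂ) * star (1/d : ℂ) *
        ∑ r : ZMod d, ∑ s : ZMod d,
          (tauC d ^ (m.val * (r.val ^ 2 + s.val ^ 2))) *
            star (tauC d ^ (m'.val * (r.val ^ 2 + s.val ^ 2))) * d := by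
    rw [Rmat, Rmat, Matrix.conjTranspose_smul, Matrix.smul_mul, Matrix.mul_smul,
      Matrix.trace_smul, Matrix.trace_smul, trace_WH_sums d hodd, smul_eq_mul, smul_eq_mul]
    ring
  set hh : ZMod d := (((d+1)/2 : ℕ) : ZMod d) with hhdef
  have hh2 : (2 : ZMod d) * hh = 1 := by
    rw [hhdef, show ((2 : ZMod d)) = ((2 : ℕ) : ZMod d) by push_cast; rfl, ← Nat.cast_mul,
      show 2 * ((d+1)/2) = d + 1 from by omega, Nat.cast_add, ZMod.natCast_self,
      Nat.cast_one, zero_add]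
  have hhne : hh ≠ 0 := by
    intro h0
    rw [h0, mul_zero] at hh2
    exact one_ne_zero hh2.symm
  set cc : ZMod d := hh * (m - m') with ccdef
  have summand : ∀ r s : ZMod d,
      (tauC d ^ (m.val * (r.val ^ 2 + s.val ^ 2))) *
        star (tauC d ^ (m'.val * (r.val ^ 2 + s.val ^ 2)))
      = psiC d (cc * r ^ 2) * psiC d (cc * s ^ 2) := by
    intro r s
    rw [tauC_pow d hodd, tauC_pow d hodd, psiC_mul_star, ← AddChar.map_add_eq_mul]
    congr 1
    rw [ccdef, hhdef]
    push_cast [ZMod.natCast_val, ZMod.cast_id]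
    ring
  have inner : (∑ r : ZMod d, ∑ s : ZMod d,
        (tauC d ^ (m.val * (r.val ^ 2 + s.val ^ 2))) *
          star (tauC d ^ (m'.val * (r.val ^ 2 + s.val ^ 2))) * (d : ℂ))
      = (∑ r : ZMod d, psiC d (cc * r ^ 2)) ^ 2 * d := by
    simp_rw [summand]
    rw [sq, Finset.sum_mul_sum, Finset.sum_mul]
    refine Finset.sum_congr rfl fun r _ => ?_
    rw [Finset.sum_mul]
  rw [key, inner]
  by_cases hm : m = m'
  · subst hm
    have hcc : cc = 0 := by rw [ccdef, sub_self, mul_zero]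
    have : (∑ r : ZMod d, psiC d (cc * r ^ 2)) = (d : ℂ) := by
      simp [hcc, Finset.card_univ, ZMod.card]
    rw [if_pos rfl, this]
    rw [show star (1 / (d:ℂ)) = 1 / d by simp]
    field_simp
  · have hcc : cc ≠ 0 := mul_ne_zero hhne (sub_ne_zero_of_ne hm)
    rw [gauss_sq d hd cc hcc, if_neg hm]
    rw [show star (1 / (d:ℂ)) = 1 / d by simp]
    field_simp
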